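/- Let q be a prime power and d a positive integer dividing q - 1 with d ≥ 2. Then there is no permutation polynomial of degree d over F_q. -/
import Mathlib

open Polynomial Finset

lemma sum_pow_card_sub_one' (F : Type*) [Field F] [Fintype F]
    (h : 1 < Fintype.card F) : ∑ x : F, x ^ (Fintype.card F - 1) = -1 := by
  classical
  have h0 : Fintype.card F - 1 ≠ 0 := by omega
  rw [← Finset.sum_sdiff (Finset.singleton_subset_iff.mpr (Finset.mem_univ (0 : F)))]
  rw [Finset.sum_singleton, zero_pow h0, add_zero]
  have : ∀ x ∈ (univ : Finset F) \ {0}, x ^ (Fintype.card F - 1) = 1 := by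
    intro x hx
    simp only [mem_sdiff, mem_singleton] at hx
    exact FiniteField.pow_card_sub_one_eq_one x hx.2
  rw [Finset.sum_congr rfl this, Finset.sum_const, nsmul_one,
    Finset.card_sdiff_of_subset (Finset.singleton_subset_iff.mpr (Finset.mem_univ (0 : F))),
    Finset.card_singleton, Finset.card_univ, Nat.cast_sub (by omega), Nat.cast_one,
    FiniteField.cast_card_eq_zero, zero_sub]

theorem no_pp_of_degree_dvd_card_sub_one (F : Type*) [Field F] [Fintype F]
    (d : ℕ) (hd2 : 2 ≤ d) (hdvd : d ∣ Fintype.card F - 1)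
    (f : Polynomial F) (hdeg : f.natDegree = d) :
    ¬ Function.Bijective (fun a : F => f.eval a) := by
  classical
  intro hbij
  set q := Fintype.card F with hq
  have hq1 : 1 < q := Fintype.one_lt_card
  have hq1d : 2 ≤ q - 1 := le_trans hd2 (Nat.le_of_dvd (by omega) hdvd)
  obtain ⟨e, he⟩ := hdvd
  have he1 : 1 ≤ e := Nat.pos_of_ne_zero (by rintro rfl; simp at he; omega)
  have helt : e < q - 1 := by nlinarith
  have hf0 : f ≠ 0 := by
    intro h; rw [h] at hdeg; simp at hdeg; omega
  set g := f ^ e with hg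
  have hgdeg : g.natDegree = q - 1 := by
    rw [hg, Polynomial.natDegree_pow, hdeg, mul_comm]; omega
  -- sum of g over F two ways
  have hsum1 : ∑ a : F, g.eval a = -(f.leadingCoeff ^ e) := by
    have heval : ∀ a : F, g.eval a = ∑ k ∈ range (q - 1 + 1), g.coeff k * a ^ k := by
      intro a
      rw [← hgdeg]
      exact Polynomial.eval_eq_sum_range a
    calc ∑ a : F, g.eval a
        = ∑ a : F, ∑ k ∈ range (q - 1 + 1), g.coeff k * a ^ k := by
          exact Finset.sum_congr rfl fun a _ => heval a
      _ = ∑ k ∈ range (q - 1 + 1), ∑ a : F, g.coeff k * a ^ k := Finset.sum_comm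
      _ = ∑ k ∈ range (q - 1 + 1), g.coeff k * ∑ a : F, a ^ k := by
          exact Finset.sum_congr rfl fun k _ => (Finset.mul_sum _ _ _).symm
      _ = -(f.leadingCoeff ^ e) := by
          rw [Finset.sum_range_succ]
          have h1 : ∀ k ∈ range (q - 1), g.coeff k * ∑ a : F, a ^ k = 0 := by
            intro k hk
            rw [FiniteField.sum_pow_lt_card_sub_one F k (Finset.mem_range.mp hk), mul_zero]
          rw [Finset.sum_eq_zero h1, zero_add, sum_pow_card_sub_one' F hq1]
          have : g.coeff (q - 1) = f.leadingCoeff ^ e := by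
            rw [← hgdeg, ← Polynomial.leadingCoeff, hg, Polynomial.leadingCoeff_pow]
          rw [this]; ring
  have hsum2 : ∑ a : F, g.eval a = 0 := by
    have : ∀ a : F, g.eval a = (f.eval a) ^ e := by
      intro a; rw [hg, Polynomial.eval_pow]
    rw [Finset.sum_congr rfl fun a _ => this a,
      Fintype.sum_bijective _ hbij (fun a : F => (f.eval a) ^ e) (fun b : F => b ^ e)
        (fun a => rfl)]
    exact FiniteField.sum_pow_lt_card_sub_one F e helt
  rw [hsum2] at hsum1
  have : f.leadingCoeff ^ e = 0 := neg_eq_zero.mp hsum1.symm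
  exact pow_ne_zero e (Polynomial.leadingCoeff_ne_zero.mpr hf0) this
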